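/- For symmetric positive definite matrices V and Σ of the same size and a matrix X̃ of full column rank, define Ω(V,Σ) = (X̃^T V^{-1} X̃)^{-1} (X̃^T V^{-1} Σ V^{-1} X̃) (X̃^T V^{-1} X̃)^{-1}. Then Ω(V,Σ) ⪰ Ω(Σ,Σ) = (X̃^T Σ^{-1} X̃)^{-1} in the Loewner order, i.e., Ω(V,Σ) - (X̃^T Σ^{-1} X̃)^{-1} is positive semidefinite. -/

import Mathlib

open Matrix

private lemma posdef_conj {N d : ℕ}
    (Xt : Matrix (Fin N) (Fin d) ℝ)
    (hrank : ∀ v : Fin d → ℝ, Xt.mulVec v = 0 → v = 0)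
    {P : Matrix (Fin N) (Fin N) ℝ} (hP : P.PosDef) :
    (Xtᵀ * P * Xt).PosDef := by
  have hXt : Xtᵀ = Xtᴴ := by ext i j; simp [conjTranspose_apply]
  refine PosDef.of_dotProduct_mulVec_pos ?_ ?_
  · rw [hXt]; exact isHermitian_conjTranspose_mul_mul Xt hP.1
  · intro x hx
    have hXx : Xt.mulVec x ≠ 0 := fun h => hx (hrank x h)
    have := hP.dotProduct_mulVec_pos hXx
    simpa only [hXt, star_mulVec, dotProduct_mulVec, vecMul_vecMul] using this

/-- The sandwich covariance `Ω(V,Σ)` is minimized in the Loewner order at `V = Σ`,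
where it equals `(X̃ᵀ Σ⁻¹ X̃)⁻¹`. -/
theorem sandwich_covariance_optimality
    {N d : ℕ}
    (Xt : Matrix (Fin N) (Fin d) ℝ)
    (hrank : ∀ v : Fin d → ℝ, Xt.mulVec v = 0 → v = 0)
    (V Sg : Matrix (Fin N) (Fin N) ℝ)
    (hV : V.PosDef) (hSg : Sg.PosDef)
    (Ω : Matrix (Fin N) (Fin N) ℝ → Matrix (Fin N) (Fin N) ℝ → Matrix (Fin d) (Fin d) ℝ)
    (hΩ : ∀ W S, Ω W S = (Xtᵀ * W⁻¹ * Xt)⁻¹ * (Xtᵀ * W⁻¹ * S * W⁻¹ * Xt) *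
      (Xtᵀ * W⁻¹ * Xt)⁻¹) :
    Ω Sg Sg = (Xtᵀ * Sg⁻¹ * Xt)⁻¹ ∧
      (Ω V Sg - (Xtᵀ * Sg⁻¹ * Xt)⁻¹).PosSemidef := by
  set A : Matrix (Fin d) (Fin d) ℝ := Xtᵀ * V⁻¹ * Xt with hA_def
  set B : Matrix (Fin d) (Fin d) ℝ := Xtᵀ * Sg⁻¹ * Xt with hB_def
  have hVi : (V⁻¹).PosDef := hV.inv
  have hSgi : (Sg⁻¹).PosDef := hSg.inv
  have hA : A.PosDef := posdef_conj Xt hrank hVi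
  have hB : B.PosDef := posdef_conj Xt hrank hSgi
  have hAu : IsUnit A.det := hA.det_pos.ne'.isUnit
  have hBu : IsUnit B.det := hB.det_pos.ne'.isUnit
  have hSgu : IsUnit Sg.det := hSg.det_pos.ne'.isUnit
  -- symmetry facts
  have hViT : V⁻¹ᵀ = V⁻¹ := by
    have := hVi.1
    simpa [IsHermitian, conjTranspose_eq_transpose_of_trivial, Matrix.map_id] using this
  have hSiT : Sg⁻¹ᵀ = Sg⁻¹ := by
    have := hSgi.1
    simpa [IsHermitian, conjTranspose_eq_transpose_of_trivial, Matrix.map_id] using this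
  have hAT : Aᵀ = A := by
    have := hA.1
    simpa [IsHermitian, conjTranspose_eq_transpose_of_trivial, Matrix.map_id] using this
  have hBT : Bᵀ = B := by
    have := hB.1
    simpa [IsHermitian, conjTranspose_eq_transpose_of_trivial, Matrix.map_id] using this
  have hAiT : A⁻¹ᵀ = A⁻¹ := by rw [Matrix.transpose_nonsing_inv, hAT]
  have hBiT : B⁻¹ᵀ = B⁻¹ := by rw [Matrix.transpose_nonsing_inv, hBT]
  have hfirst : Ω Sg Sg = B⁻¹ := by
    rw [hΩ]
    have : Xtᵀ * Sg⁻¹ * Sg * Sg⁻¹ * Xt = B := by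
      rw [hB_def, Matrix.mul_assoc (Xtᵀ * Sg⁻¹) Sg Sg⁻¹,
        Matrix.mul_nonsing_inv _ hSgu, Matrix.mul_one]
    rw [this, Matrix.nonsing_inv_mul _ hBu, Matrix.one_mul]
  refine ⟨hfirst, ?_⟩
  set M : Matrix (Fin N) (Fin d) ℝ := V⁻¹ * Xt * A⁻¹ - Sg⁻¹ * Xt * B⁻¹ with hM_def
  have key : Ω V Sg - B⁻¹ = Mᵀ * Sg * M := by
    rw [hΩ, hM_def]
    have hMT : (V⁻¹ * Xt * A⁻¹ - Sg⁻¹ * Xt * B⁻¹)ᵀ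
        = A⁻¹ * Xtᵀ * V⁻¹ - B⁻¹ * Xtᵀ * Sg⁻¹ := by
      simp [Matrix.transpose_sub, Matrix.transpose_mul, hViT, hSiT, hAiT, hBiT,
        Matrix.mul_assoc]
    rw [hMT]
    rw [Matrix.sub_mul, Matrix.sub_mul, Matrix.mul_sub, Matrix.mul_sub]
    have e1 : A⁻¹ * Xtᵀ * V⁻¹ * Sg * (V⁻¹ * Xt * A⁻¹)
        = (Xtᵀ * V⁻¹ * Xt)⁻¹ * (Xtᵀ * V⁻¹ * Sg * V⁻¹ * Xt) * (Xtᵀ * V⁻¹ * Xt)⁻¹ := by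
      rw [← hA_def]; simp only [Matrix.mul_assoc]
    have e2 : A⁻¹ * Xtᵀ * V⁻¹ * Sg * (Sg⁻¹ * Xt * B⁻¹) = B⁻¹ := by
      calc A⁻¹ * Xtᵀ * V⁻¹ * Sg * (Sg⁻¹ * Xt * B⁻¹)
          = A⁻¹ * (Xtᵀ * V⁻¹ * (Sg * Sg⁻¹) * Xt) * B⁻¹ := by simp only [Matrix.mul_assoc]
        _ = A⁻¹ * A * B⁻¹ := by rw [Matrix.mul_nonsing_inv _ hSgu, Matrix.mul_one, hA_def]
        _ = B⁻¹ := by rw [Matrix.nonsing_inv_mul _ hAu, Matrix.one_mul]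
    have e3 : B⁻¹ * Xtᵀ * Sg⁻¹ * Sg * (V⁻¹ * Xt * A⁻¹) = B⁻¹ := by
      calc B⁻¹ * Xtᵀ * Sg⁻¹ * Sg * (V⁻¹ * Xt * A⁻¹)
          = B⁻¹ * (Xtᵀ * (Sg⁻¹ * Sg) * (V⁻¹ * Xt)) * A⁻¹ := by simp only [Matrix.mul_assoc]
        _ = B⁻¹ * A * A⁻¹ := by
            rw [Matrix.nonsing_inv_mul _ hSgu, Matrix.mul_one, hA_def]; simp only [Matrix.mul_assoc]
        _ = B⁻¹ := by rw [Matrix.mul_assoc, Matrix.mul_nonsing_inv _ hAu, Matrix.mul_one]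
    have e4 : B⁻¹ * Xtᵀ * Sg⁻¹ * Sg * (Sg⁻¹ * Xt * B⁻¹) = B⁻¹ := by
      calc B⁻¹ * Xtᵀ * Sg⁻¹ * Sg * (Sg⁻¹ * Xt * B⁻¹)
          = B⁻¹ * (Xtᵀ * Sg⁻¹ * (Sg * Sg⁻¹) * Xt) * B⁻¹ := by simp only [Matrix.mul_assoc]
        _ = B⁻¹ * B * B⁻¹ := by rw [Matrix.mul_nonsing_inv _ hSgu, Matrix.mul_one, hB_def]
        _ = B⁻¹ := by rw [Matrix.nonsing_inv_mul _ hBu, Matrix.one_mul]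
    rw [e1, e2, e3, e4]
    abel
  rw [key]
  have hXM : Mᵀ = Mᴴ := by ext i j; simp [conjTranspose_apply]
  rw [hXM]
  exact hSg.posSemidef.conjTranspose_mul_mul_same M
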